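/- Suppose R = Dic(A,y,x) is not isomorphic to Q₈ × C₂^ℓ for any ℓ. For any proper subgroup U < A, the set X = {a ∈ A : a ∉ U and a² ≠ y} has cardinality at least |A|/4. -/

import Mathlib

lemma aux_exp2 {G : Type*} [Group G] [Finite G] (h : ∀ g : G, g ^ 2 = 1) :
    ∃ ℓ : ℕ, Nonempty (G ≃* Multiplicative (Fin ℓ → ZMod 2)) := by
  letI : CommGroup G :=
    { (inferInstance : Group G) with
      mul_comm := by
        intro a b
        have hab : (a * b) * (a * b) = 1 := by
          have := h (a * b); rwa [pow_two] at this
        have ha : a * a = 1 := by have := h a; rwa [pow_two] at this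
        have hb : b * b = 1 := by have := h b; rwa [pow_two] at this
        calc a * b = a * ((a*b)*(a*b)) * b := by rw [hab]; group
        _ = (a*a) * (b * a) * (b*b) := by group
        _ = b * a := by rw [ha, hb]; group }
  letI : Module (ZMod 2) (Additive G) := AddCommGroup.zmodModule (by
    intro g
    show (2 : ℕ) • g = 0
    have := h g.toMul
    rw [two_nsmul]
    show g.toMul * g.toMul = 1
    rwa [pow_two] at this)
  haveI : Module.Finite (ZMod 2) (Additive G) := Module.Finite.of_finite
  set ℓ := Module.finrank (ZMod 2) (Additive G)
  let b := Module.finBasis (ZMod 2) (Additive G)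
  let e : Additive G ≃ₗ[ZMod 2] (Fin ℓ → ZMod 2) := b.equivFun
  refine ⟨ℓ, ⟨?_⟩⟩
  exact (MulEquiv.multiplicativeAdditive G).symm.trans (AddEquiv.toMultiplicative e.toAddEquiv)

lemma aux_bad {R : Type*} [Group R] [Fintype R] (A : Subgroup R) (y x s : R)
    (hAcomm : ∀ a ∈ A, ∀ b ∈ A, a * b = b * a)
    (hy : y ∈ A) (hy2 : y ^ 2 = 1) (hy1 : y ≠ 1)
    (hx : x ∉ A) (hx2 : x ^ 2 = y)
    (hconj : ∀ a ∈ A, x⁻¹ * a * x = a⁻¹)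
    (hAind : A.index = 2)
    (hs : s ∈ A) (hss : s ^ 2 = y)
    (hsq : ∀ a ∈ A, a ^ 2 = 1 ∨ a ^ 2 = y) :
    ∃ ℓ : ℕ, Nonempty (R ≃* QuaternionGroup 2 × Multiplicative (Fin ℓ → ZMod 2)) := by
  classical
  have hmx : ∀ a ∈ A, a * x = x * a⁻¹ := by
    intro a ha
    have := hconj a ha
    calc a * x = x * (x⁻¹ * a * x) := by group
    _ = x * a⁻¹ := by rw [this]
  -- covering
  have hcardR : Nat.card A * 2 = Nat.card R := by rw [← hAind]; exact A.card_mul_index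
  have hAncard : (A : Set R).ncard = Nat.card A := by
    rw [← Nat.card_coe_set_eq]; rfl
  have hcov : ∀ r : R, r ∈ A ∨ ∃ a, a ∈ A ∧ r = x * a := by
    have hdisj : Disjoint (A : Set R) ((x * ·) '' (A : Set R)) := by
      rw [Set.disjoint_left]
      rintro r hr ⟨a, ha, rfl⟩
      exact hx (by simpa using mul_mem hr (inv_mem ha))
    have huniv : (A : Set R) ∪ ((x * ·) '' (A : Set R)) = Set.univ := by
      apply Set.eq_of_subset_of_ncard_le (Set.subset_univ _)
      rw [Set.ncard_univ, Set.ncard_union_eq hdisj,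
        Set.ncard_image_of_injective _ (mul_right_injective x), hAncard, ← hcardR]
      omega
    intro r
    have : r ∈ (A : Set R) ∪ ((x * ·) '' (A : Set R)) := huniv ▸ Set.mem_univ r
    rcases this with h | ⟨a, ha, rfl⟩
    · exact Or.inl h
    · exact Or.inr ⟨a, ha, rfl⟩
  -- the subgroup T
  let T : Subgroup R :=
    { carrier := {a | a ∈ A ∧ a ^ 2 = 1}
      one_mem' := ⟨A.one_mem, one_pow 2⟩
      mul_mem' := by
        rintro a b ⟨ha, ha2⟩ ⟨hb, hb2⟩
        refine ⟨mul_mem ha hb, ?_⟩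
        have hc := hAcomm b hb a ha
        rw [pow_two] at ha2 hb2 ⊢
        calc a * b * (a * b) = a * (b * a) * b := by group
        _ = a * (a * b) * b := by rw [hc]
        _ = (a * a) * (b * b) := by group
        _ = 1 := by rw [ha2, hb2, one_mul]
      inv_mem' := by
        rintro a ⟨ha, ha2⟩
        exact ⟨inv_mem ha, by rw [inv_pow, ha2, inv_one]⟩ }
  have hTmem : ∀ r : R, r ∈ T ↔ r ∈ A ∧ r ^ 2 = 1 := fun _ => Iff.rfl
  have hTcentral : ∀ t ∈ T, ∀ r : R, t * r = r * t := by
    rintro t ⟨htA, ht2⟩ r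
    have htinv : t⁻¹ = t := by
      apply inv_eq_of_mul_eq_one_right; rwa [← pow_two]
    have htx : t * x = x * t := by rw [hmx t htA, htinv]
    rcases hcov r with hr | ⟨a, ha, rfl⟩
    · exact hAcomm t htA r hr
    · calc t * (x * a) = (t * x) * a := by group
      _ = x * (t * a) := by rw [htx]; group
      _ = x * (a * t) := by rw [hAcomm t htA a ha]
      _ = (x * a) * t := by group
  -- powers of s
  have hs4 : s ^ 4 = 1 := by
    have : s ^ 4 = (s ^ 2) ^ 2 := by group
    rw [this, hss, hy2]
  have hs2ne : s ^ 2 ≠ 1 := by rw [hss]; exact hy1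
  have hsk : ∀ k : ℕ, s ^ k * x = x * (s ^ k)⁻¹ := fun k => hmx _ (pow_mem hs k)
  haveI : NeZero (2 * 2) := ⟨by norm_num⟩
  have helper1 : ∀ i j : ZMod (2 * 2), s ^ (i + j).val = s ^ i.val * s ^ j.val := by
    intro i j
    rw [← pow_add, ZMod.val_add, ← pow_eq_pow_mod _ hs4]
  have helper2 : ∀ i j : ZMod (2 * 2), s ^ (j - i).val = (s ^ i.val)⁻¹ * s ^ j.val := by
    intro i j
    have h := helper1 i (j - i)
    rw [show i + (j - i) = j by ring] at h
    rw [eq_inv_mul_iff_mul_eq, ← h]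
  -- complement construction inside T
  letI instTC : CommGroup T :=
    { (inferInstance : Group T) with
      mul_comm := fun a b => Subtype.ext (hAcomm _ a.2.1 _ b.2.1) }
  have y0mem : y ∈ T := ⟨hy, hy2⟩
  set y0 : T := ⟨y, y0mem⟩ with hy0def
  haveI : Finite (Subgroup T) :=
    Finite.of_injective (fun H => (H : Set T)) SetLike.coe_injective
  obtain ⟨E₀, hE₀mem, hE₀max⟩ :=
    Set.Finite.exists_maximalFor id {H : Subgroup T | y0 ∉ H} (Set.toFinite _)
      ⟨⊥, by
        simp only [Set.mem_setOf_eq, Subgroup.mem_bot]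
        intro hcon
        exact hy1 (congrArg Subtype.val hcon)⟩
  simp only [Set.mem_setOf_eq] at hE₀mem
  have hE₀dec : ∀ t : T, t ∈ E₀ ∨ y0 * t ∈ E₀ := by
    intro t
    by_contra hcon
    push_neg at hcon
    have ht2 : t * t = 1 := by
      apply Subtype.ext
      have := t.2.2
      rw [pow_two] at this
      simpa using this
    have hy₀E' : y0 ∉ E₀ ⊔ Subgroup.zpowers t := by
      intro hmem
      rcases Subgroup.mem_sup.mp hmem with ⟨e, he, z, hz, hez⟩
      rcases Subgroup.mem_zpowers_iff.mp hz with ⟨n, rfl⟩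
      have hpar : t ^ n = 1 ∨ t ^ n = t := by
        have hsplit : t ^ n = t ^ (n % 2) * (t ^ (2:ℤ)) ^ (n / 2) := by
          rw [← zpow_mul, ← zpow_add, Int.emod_add_mul_ediv n 2]
        have ht2' : t ^ (2:ℤ) = 1 := by
          rw [show (2:ℤ) = ((2:ℕ):ℤ) by norm_num, zpow_natCast, pow_two]; exact ht2
        rw [ht2', one_zpow, mul_one] at hsplit
        rcases Int.emod_two_eq_zero_or_one n with h | h <;> rw [h] at hsplit
        · left; simpa using hsplit
        · right; simpa using hsplit
      rcases hpar with h | h <;> rw [h] at hez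
      · rw [mul_one] at hez; exact hE₀mem (hez ▸ he)
      · apply hcon.2
        have : y0 * t = e * (t * t) := by rw [← hez]; group
        rw [this, ht2, mul_one]; exact he
    have hEeq : E₀ = E₀ ⊔ Subgroup.zpowers t := le_antisymm le_sup_left (hE₀max hy₀E' le_sup_left)
    exact hcon.1 (hEeq ▸ (Subgroup.mem_sup_right (Subgroup.mem_zpowers t)))
  set E : Subgroup R := E₀.map T.subtype with hEdef
  have hET : ∀ e ∈ E, e ∈ T := by
    rintro e ⟨e₀, _, rfl⟩
    exact e₀.2
  have hEsub : ∀ e ∈ E, e ∈ A ∧ e ^ 2 = 1 := fun e he => hET e he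
  have hyE : y ∉ E := by
    rintro ⟨e₀, he₀, heq⟩
    exact hE₀mem (by rwa [show e₀ = y0 from Subtype.ext heq] at he₀)
  have hdec : ∀ r, r ∈ A → r ^ 2 = 1 → (r ∈ E ∨ y * r ∈ E) := by
    intro r hr h2
    rcases hE₀dec ⟨r, hr, h2⟩ with h | h
    · exact Or.inl ⟨_, h, rfl⟩
    · exact Or.inr ⟨_, h, rfl⟩
  have hE2 : ∀ e : E, e ^ 2 = 1 := by
    intro e
    apply Subtype.ext
    have := (hEsub _ e.2).2
    simpa using this
  -- values of ZMod (2*2)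
  have h0v : ((0 : ZMod (2*2))).val = 0 := by decide
  have h1v : ((1 : ZMod (2*2))).val = 1 := by decide
  have h2v : ((2 : ZMod (2*2))).val = 2 := by decide
  have h2v' : (((2:ℕ) : ZMod (2*2))).val = 2 := by decide
  have h3v : ((3 : ZMod (2*2))).val = 3 := by decide
  have hyy : y * y = 1 := by rw [← pow_two]; exact hy2
  have hs3y : s ^ 3 * y = s := by
    rw [← hss, ← pow_add, show 3 + 2 = 5 by norm_num,
      show (5:ℕ) = 4 + 1 by norm_num, pow_add, hs4, one_mul, pow_one]
  -- the quaternion map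
  let f : QuaternionGroup 2 → R := fun g =>
    match g with
    | QuaternionGroup.a i => s ^ i.val
    | QuaternionGroup.xa i => x * s ^ i.val
  have hfa : ∀ i, f (QuaternionGroup.a i) = s ^ i.val := fun _ => rfl
  have hfxa : ∀ i, f (QuaternionGroup.xa i) = x * s ^ i.val := fun _ => rfl
  have hfmul : ∀ g₁ g₂, f (g₁ * g₂) = f g₁ * f g₂ := by
    rintro (i | i) (j | j)
    · rw [QuaternionGroup.a_mul_a, hfa, hfa, hfa]; exact helper1 i j
    · rw [QuaternionGroup.a_mul_xa, hfxa, hfa, hfxa, helper2 i j]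
      conv_rhs => rw [← mul_assoc, hsk i.val, mul_assoc]
    · rw [QuaternionGroup.xa_mul_a, hfxa, hfxa, hfa, helper1 i j, mul_assoc]
    · rw [QuaternionGroup.xa_mul_xa, hfa, hfxa, hfxa,
        helper2 i (((2:ℕ) : ZMod (2*2)) + j), helper1 ((2:ℕ) : ZMod (2*2)) j, h2v']
      have hc : s ^ 2 * (s ^ i.val)⁻¹ = (s ^ i.val)⁻¹ * s ^ 2 :=
        ((Commute.pow_pow_self s 2 i.val).inv_right).eq
      symm
      calc (x * s ^ i.val) * (x * s ^ j.val)
          = x * (s ^ i.val * x) * s ^ j.val := by group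
        _ = x * (x * (s ^ i.val)⁻¹) * s ^ j.val := by rw [hsk]
        _ = (x * x) * ((s ^ i.val)⁻¹ * s ^ j.val) := by group
        _ = s ^ 2 * ((s ^ i.val)⁻¹ * s ^ j.val) := by
            rw [show x * x = x ^ 2 from (pow_two x).symm, hx2, ← hss]
        _ = (s ^ i.val)⁻¹ * (s ^ 2 * s ^ j.val) := by
            rw [← mul_assoc, hc, mul_assoc]
  have hEcentral : ∀ (e : E) (r : R), (e : R) * r = r * e :=
    fun e r => hTcentral _ (hET _ e.2) r
  let χ : QuaternionGroup 2 × E →* R := MonoidHom.mk'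
    (fun p => f p.1 * (p.2 : R))
    (by
      rintro ⟨g1, e1⟩ ⟨g2, e2⟩
      show f (g1 * g2) * ((e1 * e2 : E) : R) = (f g1 * e1) * (f g2 * e2)
      rw [hfmul, Subgroup.coe_mul]
      have hc := hEcentral e1 (f g2)
      calc f g1 * f g2 * ((e1 : R) * e2) = f g1 * (f g2 * e1) * e2 := by group
        _ = f g1 * ((e1 : R) * f g2) * e2 := by rw [hc]
        _ = (f g1 * e1) * (f g2 * e2) := by group
      )
  have hχapp : ∀ p : QuaternionGroup 2 × E, χ p = f p.1 * (p.2 : R) := fun _ => rfl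
  have hinj : Function.Injective χ := by
    rw [injective_iff_map_eq_one]
    rintro ⟨(i | i), e⟩ h1
    · rw [hχapp, hfa] at h1
      have he : (e : R) = (s ^ i.val)⁻¹ := eq_inv_of_mul_eq_one_right h1
      have he2 : ((e : R)) ^ 2 = 1 := (hEsub _ e.2).2
      have hs2iv : s ^ (i.val * 2) = 1 := by
        rw [he, inv_pow, inv_eq_one] at he2
        rwa [pow_mul]
      have hiv : i.val < 2 * 2 := ZMod.val_lt i
      have hcases : i.val = 0 ∨ i.val = 1 ∨ i.val = 2 ∨ i.val = 3 := by omega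
      rcases hcases with h | h | h | h
      · have hi0 : i = 0 := by
          have := ZMod.val_cast_of_lt (show 0 < 2*2 by norm_num)
          exact (ZMod.val_eq_zero i).mp h
        have he1 : e = 1 := by
          apply Subtype.ext
          rw [he, h, pow_zero, inv_one, OneMemClass.coe_one]
        rw [Prod.mk_eq_one]
        exact ⟨by rw [hi0, QuaternionGroup.one_def], he1⟩
      · exfalso
        rw [h, one_mul] at hs2iv
        exact hs2ne (by rwa [show (2:ℕ) = 1 * 2 by norm_num])
      · exfalso
        apply hyE
        have hey : (e : R) = y := by
          rw [he, h, hss]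
          exact inv_eq_of_mul_eq_one_right hyy
        exact hey ▸ e.2
      · exfalso
        rw [h] at hs2iv
        have : s ^ (3 * 2) = s ^ 2 := by
          rw [show 3 * 2 = 4 + 2 by norm_num, pow_add, hs4, one_mul]
        exact hs2ne (this ▸ hs2iv)
    · rw [hχapp, hfxa] at h1
      have hxmem : x = (s ^ i.val * (e : R))⁻¹ := by
        apply eq_inv_of_mul_eq_one_left
        rw [← mul_assoc]; exact h1
      exact absurd (hxmem ▸ inv_mem (mul_mem (pow_mem hs _) (hEsub _ e.2).1)) hx
  have hT2 : ∀ r, r ∈ A → r ^ 2 = y → (s⁻¹ * r) ∈ A ∧ (s⁻¹ * r) ^ 2 = 1 := by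
    intro r hr h2
    refine ⟨mul_mem (inv_mem hs) hr, ?_⟩
    have hcr : r * s⁻¹ = s⁻¹ * r := hAcomm r hr s⁻¹ (inv_mem hs)
    calc (s⁻¹ * r) ^ 2 = s⁻¹ * (r * s⁻¹) * r := by rw [pow_two]; group
      _ = s⁻¹ * (s⁻¹ * r) * r := by rw [hcr]
      _ = (s ^ 2)⁻¹ * r ^ 2 := by rw [pow_two, pow_two]; group
      _ = 1 := by rw [hss, h2, inv_mul_cancel]
  have hsurj : Function.Surjective χ := by
    intro r
    rcases hcov r with hr | ⟨a, ha, rfl⟩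
    · rcases hsq r hr with h1 | h2
      · rcases hdec r hr h1 with he | hye
        · refine ⟨⟨QuaternionGroup.a 0, ⟨r, he⟩⟩, ?_⟩
          rw [hχapp, hfa, h0v, pow_zero, one_mul]
        · refine ⟨⟨QuaternionGroup.a 2, ⟨y * r, hye⟩⟩, ?_⟩
          rw [hχapp, hfa, h2v, hss]
          calc y * (y * r) = (y * y) * r := by group
            _ = r := by rw [hyy, one_mul]
      · obtain ⟨htA, ht2⟩ := hT2 r hr h2
        rcases hdec _ htA ht2 with he | hye
        · refine ⟨⟨QuaternionGroup.a 1, ⟨s⁻¹ * r, he⟩⟩, ?_⟩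
          rw [hχapp, hfa, h1v, pow_one]
          group
        · refine ⟨⟨QuaternionGroup.a 3, ⟨y * (s⁻¹ * r), hye⟩⟩, ?_⟩
          rw [hχapp, hfa, h3v]
          calc s ^ 3 * (y * (s⁻¹ * r)) = (s ^ 3 * y) * (s⁻¹ * r) := by group
            _ = s * (s⁻¹ * r) := by rw [hs3y]
            _ = r := by group
    · rcases hsq a ha with h1 | h2
      · rcases hdec a ha h1 with he | hye
        · refine ⟨⟨QuaternionGroup.xa 0, ⟨a, he⟩⟩, ?_⟩
          rw [hχapp, hfxa, h0v, pow_zero, mul_one]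
        · refine ⟨⟨QuaternionGroup.xa 2, ⟨y * a, hye⟩⟩, ?_⟩
          rw [hχapp, hfxa, h2v, hss]
          calc (x * y) * (y * a) = x * ((y * y) * a) := by group
            _ = x * a := by rw [hyy, one_mul]
      · obtain ⟨htA, ht2⟩ := hT2 a ha h2
        rcases hdec _ htA ht2 with he | hye
        · refine ⟨⟨QuaternionGroup.xa 1, ⟨s⁻¹ * a, he⟩⟩, ?_⟩
          rw [hχapp, hfxa, h1v, pow_one]
          group
        · refine ⟨⟨QuaternionGroup.xa 3, ⟨y * (s⁻¹ * a), hye⟩⟩, ?_⟩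
          rw [hχapp, hfxa, h3v]
          calc (x * s ^ 3) * (y * (s⁻¹ * a)) = x * ((s ^ 3 * y) * (s⁻¹ * a)) := by group
            _ = x * (s * (s⁻¹ * a)) := by rw [hs3y]
            _ = x * a := by group
  obtain ⟨ℓ, ⟨e2⟩⟩ := aux_exp2 hE2
  exact ⟨ℓ, ⟨(MulEquiv.ofBijective χ ⟨hinj, hsurj⟩).symm.trans
    (MulEquiv.prodCongr (MulEquiv.refl _) e2)⟩⟩



/-- If `R = Dic(A,y,x)` is not isomorphic to `Q₈ × C₂^ℓ` for any `ℓ`, then for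
any proper subgroup `U < A`, the set `X = {a ∈ A : a ∉ U, a² ≠ y}` has
cardinality at least `|A|/4`. -/
theorem stmt7 {R : Type*} [Group R] [Fintype R] (A : Subgroup R) (y x : R)
    (hAcomm : ∀ a ∈ A, ∀ b ∈ A, a * b = b * a)
    (hexp : ∃ a ∈ A, a ^ 2 ≠ 1)
    (hy : y ∈ A) (hy2 : y ^ 2 = 1) (hy1 : y ≠ 1)
    (hx : x ∉ A) (hx2 : x ^ 2 = y)
    (hconj : ∀ a ∈ A, x⁻¹ * a * x = a⁻¹)
    (hAind : A.index = 2)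
    (hnotQ : ¬ ∃ ℓ : ℕ,
      Nonempty (R ≃* QuaternionGroup 2 × Multiplicative (Fin ℓ → ZMod 2)))
    (U : Subgroup R) (hU : U < A) :
    Nat.card A ≤ 4 * Set.ncard {a : R | a ∈ A ∧ a ∉ U ∧ a ^ 2 ≠ y} := by
  classical
  set X := {a : R | a ∈ A ∧ a ∉ U ∧ a ^ 2 ≠ y} with hXdef
  set SS := {a : R | a ∈ A ∧ a ^ 2 = y} with hSSdef
  have hUle : U ≤ A := le_of_lt hU
  have hUb : 2 * Nat.card U ≤ Nat.card A := by
    have hcard : Nat.card (U.subgroupOf A) * (U.subgroupOf A).index = Nat.card A :=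
      Subgroup.card_mul_index _
    have hcardeq : Nat.card (U.subgroupOf A) = Nat.card U :=
      Nat.card_congr (Subgroup.subgroupOfEquivOfLe hUle).toEquiv
    have hne : (U.subgroupOf A).index ≠ 1 := by
      intro h
      rw [Subgroup.index_eq_one, Subgroup.subgroupOf_eq_top] at h
      exact hU.not_ge h
    have hnz : (U.subgroupOf A).index ≠ 0 := Subgroup.index_ne_zero_of_finite
    have h2 : 2 ≤ (U.subgroupOf A).index := by omega
    calc 2 * Nat.card U ≤ (U.subgroupOf A).index * Nat.card U :=
          Nat.mul_le_mul_right _ h2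
      _ = Nat.card A := by rw [mul_comm, ← hcardeq, hcard]
  have hSSb : 4 * SS.ncard ≤ Nat.card A := by
    by_cases hS : ∃ t, t ∈ A ∧ t ^ 2 = y
    · obtain ⟨s, hs, hss⟩ := hS
      -- T : 2-torsion of A
      let T : Subgroup R :=
        { carrier := {a | a ∈ A ∧ a ^ 2 = 1}
          one_mem' := ⟨A.one_mem, one_pow 2⟩
          mul_mem' := by
            rintro a b ⟨ha, ha2⟩ ⟨hb, hb2⟩
            refine ⟨mul_mem ha hb, ?_⟩
            have hc := hAcomm b hb a ha
            rw [pow_two] at ha2 hb2 ⊢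
            calc a * b * (a * b) = a * (b * a) * b := by group
            _ = a * (a * b) * b := by rw [hc]
            _ = (a * a) * (b * b) := by group
            _ = 1 := by rw [ha2, hb2, one_mul]
          inv_mem' := by
            rintro a ⟨ha, ha2⟩
            exact ⟨inv_mem ha, by rw [inv_pow, ha2, inv_one]⟩ }
      have hSScoset : SS = (s * ·) '' (T : Set R) := by
        ext b
        constructor
        · rintro ⟨hbA, hb2⟩
          refine ⟨s⁻¹ * b, ⟨mul_mem (inv_mem hs) hbA, ?_⟩, by group⟩
          have hcr : b * s⁻¹ = s⁻¹ * b := hAcomm b hbA s⁻¹ (inv_mem hs)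
          calc (s⁻¹ * b) ^ 2 = s⁻¹ * (b * s⁻¹) * b := by rw [pow_two]; group
            _ = s⁻¹ * (s⁻¹ * b) * b := by rw [hcr]
            _ = (s ^ 2)⁻¹ * b ^ 2 := by rw [pow_two, pow_two]; group
            _ = 1 := by rw [hss, hb2, inv_mul_cancel]
        · rintro ⟨t, ⟨htA, ht2⟩, rfl⟩
          refine ⟨mul_mem hs htA, ?_⟩
          have hct := hAcomm t htA s hs
          calc (s * t) ^ 2 = s * (t * s) * t := by rw [pow_two]; group
            _ = s * (s * t) * t := by rw [hct]
            _ = s ^ 2 * t ^ 2 := by rw [pow_two, pow_two]; group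
            _ = y := by rw [hss, ht2, mul_one]
      have hSScard : SS.ncard = Nat.card T := by
        rw [hSScoset, Set.ncard_image_of_injective _ (mul_right_injective s),
          ← Nat.card_coe_set_eq]
        rfl
      letI instA : CommGroup A :=
        { (inferInstance : Group A) with
          mul_comm := fun a b => Subtype.ext (hAcomm _ a.2 _ b.2) }
      set sq : A →* A := powMonoidHom 2 with hsqdef
      have hsqapp : ∀ a : A, sq a = a ^ 2 := fun _ => rfl
      have hmemker : ∀ a : A, a ∈ sq.ker ↔ ((a : R)) ^ 2 = 1 := by
        intro a
        rw [MonoidHom.mem_ker, hsqapp]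
        constructor
        · intro h
          have := congrArg (Subtype.val) h
          simpa using this
        · intro h
          apply Subtype.ext
          simpa using h
      have hkercard : Nat.card sq.ker = Nat.card T := by
        apply Nat.card_congr
        refine ⟨fun k => ⟨(k.1 : R), k.1.2, (hmemker k.1).mp k.2⟩,
          fun t => ⟨⟨t.1, t.2.1⟩, (hmemker _).mpr t.2.2⟩, fun _ => rfl, fun _ => rfl⟩
      have hAcard : Nat.card A = Nat.card sq.range * Nat.card sq.ker := by
        rw [Subgroup.card_eq_card_quotient_mul_card_subgroup sq.ker,
          Nat.card_congr (QuotientGroup.quotientKerEquivRange sq).toEquiv]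
      have hyr : (⟨y, hy⟩ : A) ∈ sq.range := ⟨⟨s, hs⟩, Subtype.ext (by rw [hsqapp]; simpa using hss)⟩
      set y' : sq.range := ⟨⟨y, hy⟩, hyr⟩ with hy'def
      have hy'2 : y' ^ 2 = 1 := by
        apply Subtype.ext
        apply Subtype.ext
        show (((y' ^ 2 : sq.range) : A) : R) = 1
        push_cast
        exact hy2
      have hy'1 : y' ≠ 1 := by
        intro h
        apply hy1
        have := congrArg (fun z : sq.range => ((z : A) : R)) h
        exact this
      haveI := Fact.mk Nat.prime_two
      have hord : orderOf y' = 2 := orderOf_eq_prime hy'2 hy'1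
      have hdvd : 2 ∣ Nat.card sq.range := hord ▸ orderOf_dvd_natCard y'
      by_cases hc2 : Nat.card sq.range = 2
      · exfalso
        have hne1y : (1 : A) ≠ ⟨y, hy⟩ := by
          intro h
          have h2 := congrArg Subtype.val h
          simp only [OneMemClass.coe_one] at h2
          exact hy1 h2.symm
        have hpair : ({1, (⟨y, hy⟩ : A)} : Set A) = (sq.range : Set A) := by
          apply Set.eq_of_subset_of_ncard_le
          · intro z hz
            rcases hz with rfl | rfl
            · exact one_mem _
            · exact hyr
          · rw [← Nat.card_coe_set_eq, show Nat.card (sq.range : Set A) =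
              Nat.card sq.range from rfl, hc2, Set.ncard_pair hne1y]
          · exact Set.toFinite _
        have hallA : ∀ a ∈ A, a ^ 2 = 1 ∨ a ^ 2 = y := by
          intro a ha
          have hmem : sq ⟨a, ha⟩ ∈ (sq.range : Set A) := ⟨_, rfl⟩
          rw [← hpair] at hmem
          simp only [Set.mem_insert_iff, Set.mem_singleton_iff] at hmem
          rw [hsqapp] at hmem
          rcases hmem with h | h
          · left
            have := congrArg Subtype.val h
            simpa using this
          · right
            have := congrArg Subtype.val h
            simpa using this
        exact hnotQ (aux_bad A y x s hAcomm hy hy2 hy1 hx hx2 hconj hAind hs hss hallA)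
      · have hpos : 0 < Nat.card sq.range := Nat.card_pos
        obtain ⟨k, hk⟩ := hdvd
        have h4 : 4 ≤ Nat.card sq.range := by omega
        rw [hSScard, ← hkercard]
        calc 4 * Nat.card sq.ker ≤ Nat.card sq.range * Nat.card sq.ker :=
            Nat.mul_le_mul_right _ h4
          _ = Nat.card A := hAcard.symm
    · have hSSempty : SS = ∅ := by
        ext a
        simp only [hSSdef, Set.mem_setOf_eq, Set.mem_empty_iff_false, iff_false]
        rintro ⟨h1, h2⟩
        exact hS ⟨a, h1, h2⟩
      rw [hSSempty, Set.ncard_empty]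
      omega
  have hsub : (A : Set R) ⊆ ((U : Set R) ∪ SS) ∪ X := by
    intro a haA
    by_cases hU' : a ∈ U
    · exact Or.inl (Or.inl hU')
    · by_cases hy' : a ^ 2 = y
      · exact Or.inl (Or.inr ⟨haA, hy'⟩)
      · exact Or.inr ⟨haA, hU', hy'⟩
  have hcount : (A : Set R).ncard ≤ ((U : Set R).ncard + SS.ncard) + X.ncard := by
    calc (A : Set R).ncard ≤ (((U : Set R) ∪ SS) ∪ X).ncard :=
        Set.ncard_le_ncard hsub (Set.toFinite _)
      _ ≤ ((U : Set R) ∪ SS).ncard + X.ncard := Set.ncard_union_le _ _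
      _ ≤ ((U : Set R).ncard + SS.ncard) + X.ncard :=
        Nat.add_le_add_right (Set.ncard_union_le _ _) _
  have hA' : (A : Set R).ncard = Nat.card A := by rw [← Nat.card_coe_set_eq]; rfl
  have hU'c : (U : Set R).ncard = Nat.card U := by rw [← Nat.card_coe_set_eq]; rfl
  rw [hA', hU'c] at hcount
  omega
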